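/- Let A be an arbitrary complex matrix with rows indexed by a finite set X and columns by a finite set Y, and let R be a partition of X × Y into combinatorial rectangles. For each rectangle R ∈ R let A_R denote the submatrix of A restricted to R. Then the square of the spectral norm of A is at most the sum over R ∈ R of the squares of the spectral norms of the submatrices A_R. -/

import Mathlib

open scoped BigOperators

/-- Family of probability distributions on the index set. -/
def IsDistFamily {α : Type*} {n : ℕ} (p : α → Fin n → ℝ) : Prop :=
  ∀ x, (∀ i, 0 ≤ p x i) ∧ ∑ i, p x i = 1

/-- The sum probability of indices complexity measure. -/
noncomputable def sumPI {n : ℕ} (S : Set (Fin n → Bool)) (f : (Fin n → Bool) → Bool) : ℝ :=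
  ⨅ p : {p : (Fin n → Bool) → Fin n → ℝ // IsDistFamily p},
    ⨆ q : {q : (Fin n → Bool) × (Fin n → Bool) // q.1 ∈ S ∧ q.2 ∈ S ∧ f q.1 ≠ f q.2},
      1 / ∑ i ∈ Finset.univ.filter (fun i => q.1.1 i ≠ q.1.2 i),
            Real.sqrt (p.1 q.1.1 i * p.1 q.1.2 i)

/-- The max probability of indices complexity measure. -/
noncomputable def maxPI {n : ℕ} (S : Set (Fin n → Bool)) (f : (Fin n → Bool) → Bool) : ℝ :=
  ⨅ p : {p : (Fin n → Bool) → Fin n → ℝ // IsDistFamily p},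
    ⨆ q : {q : (Fin n → Bool) × (Fin n → Bool) // q.1 ∈ S ∧ q.2 ∈ S ∧ f q.1 ≠ f q.2},
      1 / ⨆ i : {i : Fin n // q.1.1 i ≠ q.1.2 i}, Real.sqrt (p.1 q.1.1 i.1 * p.1 q.1.2 i.1)

/-- Spectral norm of a complex matrix. -/
noncomputable def specNorm {m n : Type*} [Fintype m] [Fintype n] (A : Matrix m n ℂ) : ℝ :=
  ⨆ v : {v : n → ℂ // ∑ i, ‖v i‖ ^ 2 ≤ 1}, Real.sqrt (∑ i, ‖A.mulVec v.1 i‖ ^ 2)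

/-- Spectral norm of a real matrix. -/
noncomputable def specNormR {m n : Type*} [Fintype m] [Fintype n] (A : Matrix m n ℝ) : ℝ :=
  ⨆ v : {v : n → ℝ // ∑ i, ‖v i‖ ^ 2 ≤ 1}, Real.sqrt (∑ i, ‖A.mulVec v.1 i‖ ^ 2)

/-- `Â_S`: the matrix agreeing with `A` on `S` and `0` elsewhere. -/
noncomputable def hatMat {X Y R : Type*} [Zero R] (A : Matrix X Y R) (S : Set (X × Y)) :
    Matrix X Y R :=
  fun x y => S.indicator (fun p => A p.1 p.2) (x, y)

instance {n : Type*} [Fintype n] : Nonempty {v : n → ℂ // ∑ i, ‖v i‖ ^ 2 ≤ 1} :=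
  ⟨⟨0, by simp⟩⟩

lemma specNorm_bdd {m n : Type*} [Fintype m] [Fintype n] (A : Matrix m n ℂ) :
    BddAbove (Set.range fun v : {v : n → ℂ // ∑ i, ‖v i‖ ^ 2 ≤ 1} =>
      Real.sqrt (∑ i, ‖A.mulVec v.1 i‖ ^ 2)) := by
  refine ⟨Real.sqrt (∑ i, (∑ j, ‖A i j‖) ^ 2), ?_⟩
  rintro x ⟨v, rfl⟩
  refine Real.sqrt_le_sqrt (Finset.sum_le_sum fun i _ => ?_)
  have hv1 : ∀ j, ‖v.1 j‖ ≤ 1 := by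
    intro j
    have h1 : ‖v.1 j‖ ^ 2 ≤ 1 := le_trans (Finset.single_le_sum
      (f := fun j => ‖v.1 j‖ ^ 2) (fun j _ => by positivity) (Finset.mem_univ j)) v.2
    nlinarith [norm_nonneg (v.1 j)]
  have h2 : ‖A.mulVec v.1 i‖ ≤ ∑ j, ‖A i j‖ := by
    refine le_trans (norm_sum_le _ _) (Finset.sum_le_sum fun j _ => ?_)
    rw [norm_mul]
    exact mul_le_of_le_one_right (norm_nonneg _) (hv1 j)
  have := norm_nonneg (A.mulVec v.1 i)
  nlinarith [Finset.sum_nonneg (fun j (_ : j ∈ Finset.univ) => norm_nonneg (A i j))]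

lemma specNorm_nonneg {m n : Type*} [Fintype m] [Fintype n] (A : Matrix m n ℂ) :
    0 ≤ specNorm A :=
  Real.iSup_nonneg fun _ => Real.sqrt_nonneg _

lemma norm_mulVec_le {m n : Type*} [Fintype m] [Fintype n] (A : Matrix m n ℂ)
    (v : n → ℂ) (hv : ∑ i, ‖v i‖ ^ 2 ≤ 1) :
    Real.sqrt (∑ i, ‖A.mulVec v i‖ ^ 2) ≤ specNorm A :=
  le_ciSup (specNorm_bdd A) ⟨v, hv⟩

/-- Complex Cauchy–Schwarz via norms. -/
lemma cs_complex {ι : Type*} (s : Finset ι) (a b : ι → ℂ) :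
    ‖∑ i ∈ s, (starRingEnd ℂ) (a i) * b i‖ ≤
      Real.sqrt (∑ i ∈ s, ‖a i‖ ^ 2) * Real.sqrt (∑ i ∈ s, ‖b i‖ ^ 2) := by
  calc ‖∑ i ∈ s, (starRingEnd ℂ) (a i) * b i‖ ≤ ∑ i ∈ s, ‖a i‖ * ‖b i‖ := by
        refine le_trans (norm_sum_le _ _) (Finset.sum_le_sum fun i _ => ?_)
        rw [norm_mul, RCLike.norm_conj]
    _ ≤ _ := Real.sum_mul_le_sqrt_mul_sqrt _ _ _

lemma rect_bound {X Y : Type*} [Fintype X] [Fintype Y] (A : Matrix X Y ℂ)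
    (s : Finset X) (t : Finset Y) (u : X → ℂ) (v : Y → ℂ) :
    ‖∑ p ∈ s ×ˢ t, (starRingEnd ℂ) (u p.1) * (A p.1 p.2 * v p.2)‖ ≤
      specNorm (A.submatrix (fun x : s => (x : X)) (fun y : t => (y : Y))) *
        (Real.sqrt (∑ x ∈ s, ‖u x‖ ^ 2) * Real.sqrt (∑ y ∈ t, ‖v y‖ ^ 2)) := by
  set b := Real.sqrt (∑ y ∈ t, ‖v y‖ ^ 2) with hbdef
  have hb0 : 0 ≤ b := Real.sqrt_nonneg _
  have hbsq : b ^ 2 = ∑ y ∈ t, ‖v y‖ ^ 2 := Real.sq_sqrt (by positivity)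
  by_cases hb : b = 0
  · have hvz : ∀ y ∈ t, v y = 0 := by
      intro y hy
      have h0 : ∑ y ∈ t, ‖v y‖ ^ 2 = 0 := by rw [← hbsq, hb]; ring
      have := (Finset.sum_eq_zero_iff_of_nonneg (fun y _ => by positivity)).1 h0 y hy
      simpa using this
    have : ∑ p ∈ s ×ˢ t, (starRingEnd ℂ) (u p.1) * (A p.1 p.2 * v p.2) = 0 := by
      refine Finset.sum_eq_zero fun p hp => ?_
      rw [Finset.mem_product] at hp
      rw [hvz p.2 hp.2, mul_zero, mul_zero]
    rw [this, hb, norm_zero, mul_zero, mul_zero]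
  · have hbpos : 0 < b := lt_of_le_of_ne hb0 (Ne.symm hb)
    set v' : t → ℂ := fun y => v y / (b : ℂ) with hv'def
    have hv' : ∑ y : t, ‖v' y‖ ^ 2 ≤ 1 := by
      have : ∑ y : t, ‖v' y‖ ^ 2 = (∑ y ∈ t, ‖v y‖ ^ 2) / b ^ 2 := by
        rw [← Finset.sum_coe_sort t (fun y => ‖v y‖ ^ 2), Finset.sum_div]
        refine Finset.sum_congr rfl fun y _ => ?_
        rw [hv'def, norm_div, div_pow, Complex.norm_real, Real.norm_eq_abs,
          abs_of_pos hbpos]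
      rw [this, ← hbsq, div_self (pow_ne_zero 2 hb)]
    have hkey : ∑ p ∈ s ×ˢ t, (starRingEnd ℂ) (u p.1) * (A p.1 p.2 * v p.2) =
        (b : ℂ) * ∑ x : s, (starRingEnd ℂ) (u x) *
          ((A.submatrix (fun x : s => (x : X)) (fun y : t => (y : Y))).mulVec v' x) := by
      rw [Finset.sum_product, Finset.mul_sum, ← Finset.sum_coe_sort s]
      refine Finset.sum_congr rfl fun x _ => ?_
      simp only [Matrix.mulVec, dotProduct, Matrix.submatrix_apply, hv'def]
      rw [Finset.mul_sum, Finset.mul_sum, ← Finset.sum_coe_sort t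
        (fun y => (starRingEnd ℂ) (u x) * (A x y * v y))]
      refine Finset.sum_congr rfl fun y _ => ?_
      have : (b : ℂ) ≠ 0 := by exact_mod_cast hb
      field_simp
    rw [hkey, norm_mul, Complex.norm_real, Real.norm_eq_abs, abs_of_pos hbpos]
    set M := A.submatrix (fun x : s => (x : X)) (fun y : t => (y : Y)) with hMdef
    have h1 : ‖∑ x : s, (starRingEnd ℂ) (u x) * (M.mulVec v' x)‖ ≤
        Real.sqrt (∑ x : s, ‖u (x : X)‖ ^ 2) *
          Real.sqrt (∑ x : s, ‖M.mulVec v' x‖ ^ 2) :=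
      cs_complex Finset.univ (fun x : s => u x) (M.mulVec v')
    have h2 : Real.sqrt (∑ x : s, ‖M.mulVec v' x‖ ^ 2) ≤ specNorm M :=
      norm_mulVec_le M v' hv'
    have h3 : Real.sqrt (∑ x : s, ‖u (x : X)‖ ^ 2) = Real.sqrt (∑ x ∈ s, ‖u x‖ ^ 2) := by
      rw [Finset.sum_coe_sort s (fun x => ‖u x‖ ^ 2)]
    have ha0 : (0:ℝ) ≤ Real.sqrt (∑ x : s, ‖u (x : X)‖ ^ 2) := Real.sqrt_nonneg _
    have hn0 : (0:ℝ) ≤ ‖∑ x : s, (starRingEnd ℂ) (u x) * (M.mulVec v' x)‖ := norm_nonneg _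
    have hs0 : (0:ℝ) ≤ Real.sqrt (∑ x : s, ‖M.mulVec v' x‖ ^ 2) := Real.sqrt_nonneg _
    rw [← h3]
    nlinarith [mul_le_mul_of_nonneg_left h1 hb0,
      mul_le_mul_of_nonneg_left (mul_le_mul_of_nonneg_left h2 ha0) hb0]

lemma partition_sum {X Y M : Type*} [Fintype X] [Fintype Y] [DecidableEq X] [DecidableEq Y]
    [AddCommMonoid M] (𝓡 : Finset (Finset X × Finset Y))
    (hcover : ∀ p : X × Y, ∃ r ∈ 𝓡, p.1 ∈ r.1 ∧ p.2 ∈ r.2)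
    (hdisj : ∀ r ∈ 𝓡, ∀ r' ∈ 𝓡, r ≠ r' → ∀ p : X × Y,
      ¬((p.1 ∈ r.1 ∧ p.2 ∈ r.2) ∧ (p.1 ∈ r'.1 ∧ p.2 ∈ r'.2)))
    (f : X × Y → M) :
    ∑ p : X × Y, f p = ∑ r ∈ 𝓡, ∑ p ∈ r.1 ×ˢ r.2, f p := by
  rw [← Finset.sum_biUnion]
  · apply Finset.sum_congr _ (fun _ _ => rfl)
    ext p
    simp only [Finset.mem_biUnion, Finset.mem_product, Finset.mem_univ, iff_true]
    exact ⟨fun _ => hcover p, fun _ => trivial⟩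
  · intro r hr r' hr' hne
    simp only [Function.onFun]
    rw [Finset.disjoint_left]
    intro p hp hp'
    rw [Finset.mem_product] at hp hp'
    exact hdisj r hr r' hr' hne p ⟨hp, hp'⟩

set_option maxHeartbeats 1000000 in
theorem spectral_norm_sq_le_sum_rectangle_partition
    {X Y : Type*} [Fintype X] [Fintype Y] [DecidableEq X] [DecidableEq Y]
    (A : Matrix X Y ℂ) (𝓡 : Finset (Finset X × Finset Y))
    (hcover : ∀ p : X × Y, ∃ r ∈ 𝓡, p.1 ∈ r.1 ∧ p.2 ∈ r.2)
    (hdisj : ∀ r ∈ 𝓡, ∀ r' ∈ 𝓡, r ≠ r' → ∀ p : X × Y,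
      ¬((p.1 ∈ r.1 ∧ p.2 ∈ r.2) ∧ (p.1 ∈ r'.1 ∧ p.2 ∈ r'.2))) :
    specNorm A ^ 2 ≤
      ∑ r ∈ 𝓡, specNorm (A.submatrix (fun x : r.1 => (x : X)) (fun y : r.2 => (y : Y))) ^ 2 := by
  set S : ℝ := ∑ r ∈ 𝓡,
    specNorm (A.submatrix (fun x : r.1 => (x : X)) (fun y : r.2 => (y : Y))) ^ 2 with hSdef
  have hS0 : 0 ≤ S := Finset.sum_nonneg fun r _ => sq_nonneg _
  suffices h : specNorm A ≤ Real.sqrt S by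
    have h0 := specNorm_nonneg A
    have := Real.sq_sqrt hS0
    nlinarith [Real.sqrt_nonneg S]
  refine ciSup_le fun v => ?_
  set w : X → ℂ := A.mulVec v.1 with hwdef
  set c : ℝ := Real.sqrt (∑ i, ‖w i‖ ^ 2) with hcdef
  have hc0 : 0 ≤ c := Real.sqrt_nonneg _
  have hcsq : c ^ 2 = ∑ i, ‖w i‖ ^ 2 :=
    Real.sq_sqrt (Finset.sum_nonneg fun i _ => sq_nonneg _)
  by_cases hc : c = 0
  · rw [hc]; exact Real.sqrt_nonneg _
  have hcpos : 0 < c := lt_of_le_of_ne hc0 (Ne.symm hc)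
  set u : X → ℂ := fun x => w x / (c : ℂ) with hudef
  have hu : ∑ x, ‖u x‖ ^ 2 ≤ 1 := by
    have : ∑ x, ‖u x‖ ^ 2 = (∑ x, ‖w x‖ ^ 2) / c ^ 2 := by
      rw [Finset.sum_div]
      refine Finset.sum_congr rfl fun x _ => ?_
      rw [hudef, norm_div, div_pow, Complex.norm_real, Real.norm_eq_abs, abs_of_pos hcpos]
    rw [this, ← hcsq, div_self (pow_ne_zero 2 hc)]
  -- key identity : c = ‖∑ p, conj (u p.1) * (A p.1 p.2 * v p.2)‖
  have hkey : (c : ℂ) = ∑ p : X × Y, (starRingEnd ℂ) (u p.1) * (A p.1 p.2 * v.1 p.2) := by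
    rw [Fintype.sum_prod_type]
    have : ∀ x, ∑ y, (starRingEnd ℂ) (u x) * (A x y * v.1 y)
        = (starRingEnd ℂ) (u x) * w x := by
      intro x
      rw [← Finset.mul_sum, hwdef]
      simp [Matrix.mulVec, dotProduct]
    simp only [this]
    have h2 : ∀ x, (starRingEnd ℂ) (u x) * w x = ((‖w x‖ ^ 2 : ℝ) : ℂ) / (c : ℂ) := by
      intro x
      rw [hudef, map_div₀, Complex.conj_ofReal, div_mul_eq_mul_div, RCLike.conj_mul]
      norm_num
    simp only [h2]
    rw [← Finset.sum_div, ← Complex.ofReal_sum, ← hcsq]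
    have : (c : ℂ) ≠ 0 := by exact_mod_cast hc
    field_simp
    rw [Complex.ofReal_pow]
  have hcnorm : c = ‖∑ p : X × Y, (starRingEnd ℂ) (u p.1) * (A p.1 p.2 * v.1 p.2)‖ := by
    rw [← hkey, Complex.norm_real, Real.norm_eq_abs, abs_of_pos hcpos]
  rw [hcnorm, partition_sum 𝓡 hcover hdisj]
  calc ‖∑ r ∈ 𝓡, ∑ p ∈ r.1 ×ˢ r.2, (starRingEnd ℂ) (u p.1) * (A p.1 p.2 * v.1 p.2)‖
      ≤ ∑ r ∈ 𝓡, ‖∑ p ∈ r.1 ×ˢ r.2, (starRingEnd ℂ) (u p.1) * (A p.1 p.2 * v.1 p.2)‖ :=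
        norm_sum_le _ _
    _ ≤ ∑ r ∈ 𝓡, specNorm (A.submatrix (fun x : r.1 => (x : X)) (fun y : r.2 => (y : Y))) *
          (Real.sqrt (∑ x ∈ r.1, ‖u x‖ ^ 2) * Real.sqrt (∑ y ∈ r.2, ‖v.1 y‖ ^ 2)) :=
        Finset.sum_le_sum fun r _ => rect_bound A r.1 r.2 u v.1
    _ ≤ Real.sqrt S * Real.sqrt (∑ r ∈ 𝓡,
          (Real.sqrt (∑ x ∈ r.1, ‖u x‖ ^ 2) * Real.sqrt (∑ y ∈ r.2, ‖v.1 y‖ ^ 2)) ^ 2) :=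
        Real.sum_mul_le_sqrt_mul_sqrt _ _ _
    _ ≤ Real.sqrt S * 1 := by
        refine mul_le_mul_of_nonneg_left ?_ (Real.sqrt_nonneg _)
        rw [Real.sqrt_le_one]
        have heq : ∑ r ∈ 𝓡, (Real.sqrt (∑ x ∈ r.1, ‖u x‖ ^ 2) *
              Real.sqrt (∑ y ∈ r.2, ‖v.1 y‖ ^ 2)) ^ 2
            = ∑ r ∈ 𝓡, ∑ p ∈ r.1 ×ˢ r.2, ‖u p.1‖ ^ 2 * ‖v.1 p.2‖ ^ 2 := by
          refine Finset.sum_congr rfl fun r _ => ?_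
          have h1 : (0:ℝ) ≤ ∑ x ∈ r.1, ‖u x‖ ^ 2 :=
            Finset.sum_nonneg fun x _ => sq_nonneg _
          have h2 : (0:ℝ) ≤ ∑ y ∈ r.2, ‖v.1 y‖ ^ 2 :=
            Finset.sum_nonneg fun y _ => sq_nonneg _
          rw [mul_pow, Real.sq_sqrt h1, Real.sq_sqrt h2,
            Finset.sum_mul_sum, Finset.sum_product]
        rw [heq, ← partition_sum 𝓡 hcover hdisj (fun p => ‖u p.1‖ ^ 2 * ‖v.1 p.2‖ ^ 2)]
        have : ∑ p : X × Y, ‖u p.1‖ ^ 2 * ‖v.1 p.2‖ ^ 2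
            = (∑ x, ‖u x‖ ^ 2) * (∑ y, ‖v.1 y‖ ^ 2) := by
          rw [Finset.sum_mul_sum, Fintype.sum_prod_type]
        rw [this]
        have hv2 : 0 ≤ ∑ y, ‖v.1 y‖ ^ 2 := Finset.sum_nonneg fun y _ => sq_nonneg _
        have hu2 : 0 ≤ ∑ x, ‖u x‖ ^ 2 := Finset.sum_nonneg fun x _ => sq_nonneg _
        nlinarith [v.2]
    _ = Real.sqrt S := mul_one _
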